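/- Let 0 < ε < 1 be fixed. There exists a constant A ≥ 1 such that for all points a, b in the unit disc D: if dist_P(a,b) ≤ A^{−1}e^{−R}, then there exist automorphisms τ_a, τ_b of D with τ_a(0) = a, τ_b(0) = b, and dist_P(τ_a(ξ), τ_b(ξ)) ≤ ε for every ξ ∈ D_R. -/

import Mathlib

open Set Complex

noncomputable section

/-- The inverse hyperbolic tangent `tanh⁻¹ x = ½ log((1+x)/(1-x))`. -/
def arTanh (x : ℝ) : ℝ := Real.log ((1 + x) / (1 - x)) / 2

/-- The Poincaré distance on the unit disc:
`dist_P(w₁,w₂) = tanh⁻¹ (|w₁ - w₂| / |1 - w̄₁ w₂|)`. -/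
def distP (w₁ w₂ : ℂ) : ℝ :=
  arTanh (‖w₁ - w₂‖ / ‖1 - (starRingEnd ℂ) w₁ * w₂‖)

/-- `D_R`, the disc of center `0` and of hyperbolic radius `R`, i.e. `D_R = r·D`
with `R = log((1+r)/(1-r))`, that is, `r = tanh (R/2)`. -/
def hyperDisc (R : ℝ) : Set ℂ := {z : ℂ | ‖z‖ < Real.tanh (R / 2)}

end

/-- An automorphism of the unit disc: a rotated Möbius transformation
`z ↦ e^{iθ} (z - w)/(1 - w̄ z)` with `|w| < 1`. -/
def IsDiscAut (f : ℂ → ℂ) : Prop :=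
  ∃ (θ : ℝ) (w : ℂ), ‖w‖ < 1 ∧
    ∀ z : ℂ, f z = Complex.exp (θ * Complex.I) * (z - w) / (1 - (starRingEnd ℂ) w * z)

/- ## Auxiliary lemmas -/

lemma tanh_eq' (x : ℝ) :
    Real.tanh x = (Real.exp (2*x) - 1) / (Real.exp (2*x) + 1) := by
  rw [Real.tanh_eq_sinh_div_cosh, Real.sinh_eq, Real.cosh_eq,
    show (2:ℝ)*x = x + x by ring, Real.exp_add, Real.exp_neg]
  have h := Real.exp_pos x
  have h2 : Real.exp x * Real.exp x + 1 > 0 := by positivity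
  field_simp

lemma tanh_pos' {x : ℝ} (hx : 0 < x) : 0 < Real.tanh x := by
  rw [Real.tanh_eq_sinh_div_cosh]
  exact div_pos (Real.sinh_pos_iff.mpr hx) (Real.cosh_pos x)

lemma tanh_nonneg' {x : ℝ} (hx : 0 ≤ x) : 0 ≤ Real.tanh x := by
  rcases eq_or_lt_of_le hx with h | h
  · simp [← h, Real.tanh_eq_sinh_div_cosh]
  · exact (tanh_pos' h).le

lemma tanh_lt_one' (x : ℝ) : Real.tanh x < 1 := by
  rw [tanh_eq']
  have h := Real.exp_pos (2*x)
  rw [div_lt_one (by linarith)]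
  linarith

lemma tanh_le_lin {x : ℝ} (hx : 0 ≤ x) : Real.tanh x ≤ x * Real.exp (2*x) := by
  rw [tanh_eq']
  have hE := Real.exp_pos (2*x)
  have hE1 : 1 ≤ Real.exp (2*x) := Real.one_le_exp (by linarith)
  have hkey : Real.exp (2*x) - 1 ≤ 2*x*Real.exp (2*x) := by
    have h := Real.add_one_le_exp (-(2*x))
    have h2 : Real.exp (-(2*x)) = (Real.exp (2*x))⁻¹ := Real.exp_neg _
    rw [h2] at h
    have h4 : (-(2*x)+1) * Real.exp (2*x) ≤ (Real.exp (2*x))⁻¹ * Real.exp (2*x) :=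
      mul_le_mul_of_nonneg_right h hE.le
    rw [inv_mul_cancel₀ (ne_of_gt hE)] at h4
    nlinarith
  rw [div_le_iff₀ (by linarith)]
  nlinarith

lemma arTanh_tanh' (x : ℝ) : arTanh (Real.tanh x) = x := by
  rw [tanh_eq', arTanh]
  have hE := Real.exp_pos (2*x)
  have h1 : 1 + (Real.exp (2*x) - 1) / (Real.exp (2*x) + 1) =
      2 * Real.exp (2*x) / (Real.exp (2*x) + 1) := by field_simp; ring
  have h2 : 1 - (Real.exp (2*x) - 1) / (Real.exp (2*x) + 1) =
      2 / (Real.exp (2*x) + 1) := by field_simp; ring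
  rw [h1, h2]
  have h3 : 2 * Real.exp (2*x) / (Real.exp (2*x) + 1) / (2 / (Real.exp (2*x) + 1)) =
      Real.exp (2*x) := by
    rw [div_div_div_comm]
    rw [div_self (by linarith), mul_div_assoc]
    ring
  rw [h3, Real.log_exp]; ring

lemma arTanh_mono' {x y : ℝ} (hx : 0 ≤ x) (hxy : x ≤ y) (hy : y < 1) :
    arTanh x ≤ arTanh y := by
  unfold arTanh
  have h0 : 0 < (1+x)/(1-x) := div_pos (by linarith) (by linarith)
  have h : (1+x)/(1-x) ≤ (1+y)/(1-y) := by
    rw [div_le_div_iff₀ (by linarith) (by linarith)]; nlinarith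
  have := Real.log_le_log h0 h
  linarith

lemma le_tanh_of_arTanh_le {x c : ℝ} (hx0 : 0 ≤ x) (hx1 : x < 1)
    (h : arTanh x ≤ c) : x ≤ Real.tanh c := by
  have h1 : (1+x)/(1-x) ≤ Real.exp (2*c) := by
    have hpos : 0 < (1+x)/(1-x) := div_pos (by linarith) (by linarith)
    calc (1+x)/(1-x) = Real.exp (Real.log ((1+x)/(1-x))) := (Real.exp_log hpos).symm
      _ ≤ Real.exp (2*c) := by
          apply Real.exp_le_exp.mpr
          unfold arTanh at h; linarith
  have hE := Real.exp_pos (2*c)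
  rw [tanh_eq', le_div_iff₀ (by linarith)]
  rw [div_le_iff₀ (by linarith)] at h1
  nlinarith

lemma exp_neg_le_one_sub_tanh_sq {R : ℝ} (hR : 0 < R) :
    Real.exp (-R) ≤ 1 - Real.tanh (R/2)^2 := by
  have hT := tanh_eq' (R/2)
  rw [show 2*(R/2) = R by ring] at hT
  have hE1 : 1 ≤ Real.exp R := Real.one_le_exp hR.le
  have hE := Real.exp_pos R
  have h4 : ((Real.exp R - 1)/(Real.exp R + 1))^2 =
      (Real.exp R - 1)^2/(Real.exp R + 1)^2 := div_pow _ _ 2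
  have h5 : 1 - (Real.exp R - 1)^2/(Real.exp R + 1)^2 =
      4 * Real.exp R/(Real.exp R + 1)^2 := by
    field_simp
    ring
  rw [hT, Real.exp_neg, h4, h5, inv_eq_one_div, div_le_div_iff₀ hE (by positivity)]
  nlinarith

lemma exp_le_two_of_le {x : ℝ} (h0 : 0 ≤ x) (h1 : x ≤ 1/4) : Real.exp x ≤ 2 := by
  have h6 := Real.add_one_le_exp (-x)
  rw [Real.exp_neg] at h6
  have h7 := Real.exp_pos x
  have h9 : (1 - x) * Real.exp x ≤ (Real.exp x)⁻¹ * Real.exp x :=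
    mul_le_mul_of_nonneg_right (by linarith) h7.le
  rw [inv_mul_cancel₀ (ne_of_gt h7)] at h9
  nlinarith

lemma normSq_identity (a b : ℂ) :
    Complex.normSq (1 - (starRingEnd ℂ) a * b) - Complex.normSq (a - b) =
      (1 - Complex.normSq a) * (1 - Complex.normSq b) := by
  simp only [Complex.normSq_apply, Complex.sub_re, Complex.sub_im, Complex.mul_re,
    Complex.mul_im, Complex.one_re, Complex.one_im, Complex.conj_re, Complex.conj_im]
  ring

lemma abs_add_lower (x y : ℂ) :
    ‖x‖ - ‖y‖ ≤ ‖x + y‖ := by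
  have h := norm_add_le (x + y) (-y)
  simp only [add_neg_cancel_right, norm_neg] at h
  linarith

lemma abs_sub_lower (x y : ℂ) :
    ‖x‖ - ‖y‖ ≤ ‖x - y‖ := by
  have h := norm_add_le (x - y) y
  simp only [sub_add_cancel] at h
  linarith

set_option maxHeartbeats 1000000 in
/-- for fixed `0 < ε < 1` there is `A ≥ 1` such that whenever
`dist_P(a,b) ≤ A⁻¹ e^{-R}`, there are automorphisms `τ_a, τ_b` of `D` with
`τ_a(0) = a`, `τ_b(0) = b` and `dist_P(τ_a(ξ), τ_b(ξ)) ≤ ε` for all `ξ ∈ D_R`. -/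
theorem close_points_close_automorphisms (ε : ℝ) (hε0 : 0 < ε) (hε1 : ε < 1) :
    ∃ A : ℝ, 1 ≤ A ∧ ∀ (R : ℝ), 0 < R → ∀ a b : ℂ,
    ‖a‖ < 1 → ‖b‖ < 1 →
    distP a b ≤ A⁻¹ * Real.exp (-R) →
    ∃ τa τb : ℂ → ℂ, IsDiscAut τa ∧ IsDiscAut τb ∧ τa 0 = a ∧ τb 0 = b ∧
      ∀ ξ ∈ hyperDisc R, distP (τa ξ) (τb ξ) ≤ ε := by
  have hτpos : 0 < Real.tanh ε := tanh_pos' hε0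
  have hτ1 : Real.tanh ε < 1 := tanh_lt_one' ε
  refine ⟨16 / Real.tanh ε, ?_, ?_⟩
  · rw [le_div_iff₀ hτpos]; linarith
  intro R hR a b ha hb hab
  refine ⟨fun z => (z + a) / (1 + (starRingEnd ℂ) a * z),
          fun z => (z + b) / (1 + (starRingEnd ℂ) b * z), ?_, ?_, ?_, ?_, ?_⟩
  · refine ⟨0, -a, by simpa using ha, fun z => ?_⟩
    simp [Complex.ofReal_zero, Complex.exp_zero, map_neg, sub_neg_eq_add, neg_mul,
      sub_neg_eq_add]
  · refine ⟨0, -b, by simpa using hb, fun z => ?_⟩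
    simp [Complex.ofReal_zero, Complex.exp_zero, map_neg, sub_neg_eq_add, neg_mul,
      sub_neg_eq_add]
  · simp
  · simp
  intro ξ hξ
  have hξ' : ‖ξ‖ < Real.tanh (R/2) := hξ
  have ht1 : ‖ξ‖ < 1 := hξ'.trans (tanh_lt_one' _)
  have ht0 : 0 ≤ ‖ξ‖ := norm_nonneg ξ
  have hexpR : 0 < Real.exp (-R) := Real.exp_pos _
  have hexpR1 : Real.exp (-R) ≤ 1 := by
    rw [show (1:ℝ) = Real.exp 0 by simp]
    exact Real.exp_le_exp.mpr (by linarith)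
  -- the pseudo-hyperbolic data of a, b
  have hL : 0 < ‖1 - (starRingEnd ℂ) a * b‖ := by
    have h := abs_sub_lower 1 ((starRingEnd ℂ) a * b)
    rw [norm_one, norm_mul, Complex.norm_conj] at h
    have h2 : ‖a‖ * ‖b‖ ≤ ‖b‖ :=
      mul_le_of_le_one_left (norm_nonneg b) ha.le
    linarith
  have hd0 : 0 ≤ ‖a - b‖ := norm_nonneg _
  have hdL : ‖a - b‖ < ‖1 - (starRingEnd ℂ) a * b‖ := by
    have h := normSq_identity a b
    have ha2 : Complex.normSq a < 1 := by
      rw [← Complex.sq_norm]; nlinarith [norm_nonneg a]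
    have hb2 : Complex.normSq b < 1 := by
      rw [← Complex.sq_norm]; nlinarith [norm_nonneg b]
    have h2 : ‖a-b‖ ^ 2 < ‖1 - (starRingEnd ℂ) a * b‖ ^ 2 := by
      rw [Complex.sq_norm, Complex.sq_norm]; nlinarith
    exact lt_of_pow_lt_pow_left₀ 2 hL.le h2
  -- from the hypothesis : |a-b| ≤ (tanh ε / 8) e^{-R} |1 - āb|
  have hd2 : ‖a - b‖ ≤
      Real.tanh ε / 8 * Real.exp (-R) * ‖1 - (starRingEnd ℂ) a * b‖ := by
    have hab' : arTanh (‖a - b‖ / ‖1 - (starRingEnd ℂ) a * b‖) ≤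
        Real.tanh ε / 16 * Real.exp (-R) := by
      have h1 : (16 / Real.tanh ε)⁻¹ = Real.tanh ε / 16 := by
        rw [inv_div]
      calc arTanh _ = distP a b := rfl
        _ ≤ (16 / Real.tanh ε)⁻¹ * Real.exp (-R) := hab
        _ = Real.tanh ε / 16 * Real.exp (-R) := by rw [h1]
    have hη0 : 0 ≤ Real.tanh ε / 16 * Real.exp (-R) := by positivity
    have hη8 : Real.tanh ε / 16 * Real.exp (-R) ≤ 1/8 := by nlinarith
    have h3 := le_tanh_of_arTanh_le (div_nonneg hd0 hL.le) ((div_lt_one hL).mpr hdL) hab'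
    have h4 := tanh_le_lin hη0
    have h5 : Real.exp (2*(Real.tanh ε / 16 * Real.exp (-R))) ≤ 2 :=
      exp_le_two_of_le (by positivity) (by linarith)
    have h10 := mul_le_mul_of_nonneg_left h5 hη0
    have h9 : ‖a - b‖ / ‖1 - (starRingEnd ℂ) a * b‖ ≤
        Real.tanh ε / 8 * Real.exp (-R) := by linarith
    rw [div_le_iff₀ hL] at h9
    linarith
  -- bound on 1 - |ξ|²
  have hs : Real.exp (-R) ≤ 1 - (‖ξ‖)^2 := by
    have h1 := exp_neg_le_one_sub_tanh_sq hR
    have h2 : 0 ≤ Real.tanh (R/2) := tanh_nonneg' (by linarith)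
    nlinarith
  -- the denominators are nonzero
  have hD1pos : 0 < ‖1 + (starRingEnd ℂ) a * ξ‖ := by
    have h := abs_add_lower 1 ((starRingEnd ℂ) a * ξ)
    rw [norm_one, norm_mul, Complex.norm_conj] at h
    have h2 : ‖a‖ * ‖ξ‖ ≤ ‖ξ‖ :=
      mul_le_of_le_one_left ht0 ha.le
    linarith
  have hD2pos : 0 < ‖1 + (starRingEnd ℂ) b * ξ‖ := by
    have h := abs_add_lower 1 ((starRingEnd ℂ) b * ξ)
    rw [norm_one, norm_mul, Complex.norm_conj] at h
    have h2 : ‖b‖ * ‖ξ‖ ≤ ‖ξ‖ :=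
      mul_le_of_le_one_left ht0 hb.le
    linarith
  have hD1c : 0 < ‖1 + a * (starRingEnd ℂ) ξ‖ := by
    have h := abs_add_lower 1 (a * (starRingEnd ℂ) ξ)
    rw [norm_one, norm_mul, Complex.norm_conj] at h
    have h2 : ‖a‖ * ‖ξ‖ ≤ ‖ξ‖ :=
      mul_le_of_le_one_left ht0 ha.le
    linarith
  have hD1ne : (1 + (starRingEnd ℂ) a * ξ) ≠ 0 := by
    intro h; rw [h] at hD1pos; simp at hD1pos
  have hD2ne : (1 + (starRingEnd ℂ) b * ξ) ≠ 0 := by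
    intro h; rw [h] at hD2pos; simp at hD2pos
  have hD1cne : (1 + a * (starRingEnd ℂ) ξ) ≠ 0 := by
    intro h; rw [h] at hD1c; simp at hD1c
  -- algebra : the difference
  have huv : (ξ + a) / (1 + (starRingEnd ℂ) a * ξ) - (ξ + b) / (1 + (starRingEnd ℂ) b * ξ)
      = (((starRingEnd ℂ) b - (starRingEnd ℂ) a) * ξ^2 +
          (a * (starRingEnd ℂ) b - (starRingEnd ℂ) a * b) * ξ + (a - b))
        / ((1 + (starRingEnd ℂ) a * ξ) * (1 + (starRingEnd ℂ) b * ξ)) := by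
    rw [div_sub_div _ _ hD1ne hD2ne]
    ring
  have hconj : (starRingEnd ℂ) ((ξ + a) / (1 + (starRingEnd ℂ) a * ξ)) =
      ((starRingEnd ℂ) ξ + (starRingEnd ℂ) a) / (1 + a * (starRingEnd ℂ) ξ) := by
    rw [map_div₀, map_add, map_add, map_mul, Complex.conj_conj, map_one]
  have h1uv : 1 - (starRingEnd ℂ) ((ξ + a) / (1 + (starRingEnd ℂ) a * ξ)) *
        ((ξ + b) / (1 + (starRingEnd ℂ) b * ξ))
      = (((1 - (starRingEnd ℂ) a * b) -
            (1 - a * (starRingEnd ℂ) b) * (ξ * (starRingEnd ℂ) ξ)) +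
          (((starRingEnd ℂ) b - (starRingEnd ℂ) a) * ξ + (a - b) * (starRingEnd ℂ) ξ))
        / ((1 + a * (starRingEnd ℂ) ξ) * (1 + (starRingEnd ℂ) b * ξ)) := by
    rw [hconj, div_mul_div_comm, one_sub_div (mul_ne_zero hD1cne hD2ne)]
    ring
  -- bounds on the numerators
  have habsconjsub : ‖(starRingEnd ℂ) b - (starRingEnd ℂ) a‖ =
      ‖a - b‖ := by
    rw [← map_sub, Complex.norm_conj, norm_sub_rev]
  have hmid : ‖a * (starRingEnd ℂ) b - (starRingEnd ℂ) a * b‖ ≤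
      2 * ‖a - b‖ := by
    have h1 : a * (starRingEnd ℂ) b - (starRingEnd ℂ) a * b =
        a * (starRingEnd ℂ) (b - a) + (starRingEnd ℂ) a * (a - b) := by
      rw [map_sub]; ring
    rw [h1]
    calc ‖a * (starRingEnd ℂ) (b - a) + (starRingEnd ℂ) a * (a - b)‖ ≤
        ‖a * (starRingEnd ℂ) (b - a)‖ +
        ‖(starRingEnd ℂ) a * (a - b)‖ := norm_add_le _ _
      _ ≤ 2 * ‖a - b‖ := by
        rw [norm_mul, norm_mul, Complex.norm_conj, Complex.norm_conj, norm_sub_rev b a]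
        nlinarith [norm_nonneg a, norm_nonneg (a - b)]
  have hN1 : ‖((starRingEnd ℂ) b - (starRingEnd ℂ) a) * ξ^2 +
        (a * (starRingEnd ℂ) b - (starRingEnd ℂ) a * b) * ξ + (a - b)‖ ≤
      ‖a - b‖ * (1 + ‖ξ‖)^2 := by
    calc ‖_‖ ≤
        ‖((starRingEnd ℂ) b - (starRingEnd ℂ) a) * ξ^2 +
          (a * (starRingEnd ℂ) b - (starRingEnd ℂ) a * b) * ξ‖ + ‖a - b‖ :=
          norm_add_le _ _
      _ ≤ ‖((starRingEnd ℂ) b - (starRingEnd ℂ) a) * ξ^2‖ +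
          ‖(a * (starRingEnd ℂ) b - (starRingEnd ℂ) a * b) * ξ‖ +
          ‖a - b‖ := by
          have h := norm_add_le (((starRingEnd ℂ) b - (starRingEnd ℂ) a) * ξ^2)
            ((a * (starRingEnd ℂ) b - (starRingEnd ℂ) a * b) * ξ)
          linarith
      _ ≤ ‖a - b‖ * (1 + ‖ξ‖)^2 := by
          rw [norm_mul, norm_mul, norm_pow, habsconjsub]
          nlinarith [norm_nonneg (a * (starRingEnd ℂ) b - (starRingEnd ℂ) a * b), hmid]
  have habsM : ‖1 - (starRingEnd ℂ) a * b‖ * (1 - (‖ξ‖)^2) ≤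
      ‖(1 - (starRingEnd ℂ) a * b) -
        (1 - a * (starRingEnd ℂ) b) * (ξ * (starRingEnd ℂ) ξ)‖ := by
    have h1 : ‖1 - a * (starRingEnd ℂ) b‖ =
        ‖1 - (starRingEnd ℂ) a * b‖ := by
      have e : (1:ℂ) - a * (starRingEnd ℂ) b = (starRingEnd ℂ) (1 - (starRingEnd ℂ) a * b) := by
        rw [map_sub, map_mul, map_one, Complex.conj_conj]
      rw [e, Complex.norm_conj]
    have h2 := abs_sub_lower (1 - (starRingEnd ℂ) a * b)
      ((1 - a * (starRingEnd ℂ) b) * (ξ * (starRingEnd ℂ) ξ))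
    rw [norm_mul, norm_mul, Complex.norm_conj, h1] at h2
    nlinarith
  have habsE : ‖((starRingEnd ℂ) b - (starRingEnd ℂ) a) * ξ +
        (a - b) * (starRingEnd ℂ) ξ‖ ≤ 2 * ‖a - b‖ := by
    calc ‖_‖ ≤ ‖((starRingEnd ℂ) b - (starRingEnd ℂ) a) * ξ‖ +
        ‖(a - b) * (starRingEnd ℂ) ξ‖ := norm_add_le _ _
      _ ≤ 2 * ‖a - b‖ := by
          rw [norm_mul, norm_mul, habsconjsub, Complex.norm_conj]
          nlinarith [norm_nonneg (a - b)]
  have hN2 : ‖1 - (starRingEnd ℂ) a * b‖ * (1 - (‖ξ‖)^2) -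
        2 * ‖a - b‖ ≤
      ‖((1 - (starRingEnd ℂ) a * b) -
          (1 - a * (starRingEnd ℂ) b) * (ξ * (starRingEnd ℂ) ξ)) +
        (((starRingEnd ℂ) b - (starRingEnd ℂ) a) * ξ + (a - b) * (starRingEnd ℂ) ξ)‖ := by
    have h := abs_add_lower ((1 - (starRingEnd ℂ) a * b) -
        (1 - a * (starRingEnd ℂ) b) * (ξ * (starRingEnd ℂ) ξ))
      (((starRingEnd ℂ) b - (starRingEnd ℂ) a) * ξ + (a - b) * (starRingEnd ℂ) ξ)
    linarith
  have hN2pos : 0 < ‖((1 - (starRingEnd ℂ) a * b) -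
          (1 - a * (starRingEnd ℂ) b) * (ξ * (starRingEnd ℂ) ξ)) +
        (((starRingEnd ℂ) b - (starRingEnd ℂ) a) * ξ + (a - b) * (starRingEnd ℂ) ξ)‖ := by
    nlinarith [mul_le_mul_of_nonneg_left hs hL.le,
      mul_nonneg (show (0:ℝ) ≤ 1 - Real.tanh ε by linarith)
        (mul_pos hL hexpR).le]
  -- ratio identity
  have hratio : ‖(ξ + a) / (1 + (starRingEnd ℂ) a * ξ) -
        (ξ + b) / (1 + (starRingEnd ℂ) b * ξ)‖ /
      ‖1 - (starRingEnd ℂ) ((ξ + a) / (1 + (starRingEnd ℂ) a * ξ)) *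
        ((ξ + b) / (1 + (starRingEnd ℂ) b * ξ))‖
      = ‖((starRingEnd ℂ) b - (starRingEnd ℂ) a) * ξ^2 +
          (a * (starRingEnd ℂ) b - (starRingEnd ℂ) a * b) * ξ + (a - b)‖ /
        ‖((1 - (starRingEnd ℂ) a * b) -
            (1 - a * (starRingEnd ℂ) b) * (ξ * (starRingEnd ℂ) ξ)) +
          (((starRingEnd ℂ) b - (starRingEnd ℂ) a) * ξ + (a - b) * (starRingEnd ℂ) ξ)‖ := by
    rw [huv, h1uv, norm_div, norm_div, norm_mul, norm_mul]
    have habsD1c : ‖1 + a * (starRingEnd ℂ) ξ‖ =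
        ‖1 + (starRingEnd ℂ) a * ξ‖ := by
      have e : (1:ℂ) + a * (starRingEnd ℂ) ξ = (starRingEnd ℂ) (1 + (starRingEnd ℂ) a * ξ) := by
        rw [map_add, map_mul, map_one, Complex.conj_conj]
      rw [e, Complex.norm_conj]
    rw [habsD1c]
    rw [div_div_div_comm, div_self (by positivity), div_one]
  -- conclusion
  show distP ((ξ + a) / (1 + (starRingEnd ℂ) a * ξ))
      ((ξ + b) / (1 + (starRingEnd ℂ) b * ξ)) ≤ ε
  unfold distP
  rw [hratio]
  have hfinal : ‖((starRingEnd ℂ) b - (starRingEnd ℂ) a) * ξ^2 +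
          (a * (starRingEnd ℂ) b - (starRingEnd ℂ) a * b) * ξ + (a - b)‖ /
        ‖((1 - (starRingEnd ℂ) a * b) -
            (1 - a * (starRingEnd ℂ) b) * (ξ * (starRingEnd ℂ) ξ)) +
          (((starRingEnd ℂ) b - (starRingEnd ℂ) a) * ξ + (a - b) * (starRingEnd ℂ) ξ)‖ ≤
      Real.tanh ε := by
    rw [div_le_iff₀ hN2pos]
    have hC := mul_le_mul_of_nonneg_left hN2 hτpos.le
    have hD := mul_le_mul_of_nonneg_left (mul_le_mul_of_nonneg_left hs hL.le) hτpos.le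
    have hE : Real.tanh ε * ‖a - b‖ ≤ ‖a - b‖ := by nlinarith
    have hN1b4 : ‖((starRingEnd ℂ) b - (starRingEnd ℂ) a) * ξ^2 +
          (a * (starRingEnd ℂ) b - (starRingEnd ℂ) a * b) * ξ + (a - b)‖ ≤
        4 * ‖a - b‖ := by nlinarith
    nlinarith [hd2, hd0, hτpos]
  calc arTanh _ ≤ arTanh (Real.tanh ε) := arTanh_mono' (by positivity) hfinal hτ1
    _ = ε := arTanh_tanh' ε
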